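/- Let n ≥ 2 and m_0, …, m_n ≥ 2 be integers with ∑_{j=0}^n 1/m_j ≥ 3, and let positive integers γ_0, …, γ_n be given. Then ∑_{q=1}^∞ q^{-Γ+ε} ∏_{j=0}^n gcd(γ_j, q)^{1/m_j} ≪_ε ∏_{j=0}^n γ_j^{1/m_j}, where Γ = ∑_{j=0}^n 1/m_j − 1 and ε > 0 is sufficiently small. -/
import Mathlib
set_option maxHeartbeats 1000000


open scoped BigOperators

/-- `∑_q q^{-Γ+ε} ∏_j gcd(γ_j, q)^{1/m_j} ≪ ∏_j γ_j^{1/m_j}` where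
`Γ = ∑ 1/m_j - 1 ≥ 2` and `ε > 0` is sufficiently small. -/
theorem singular_series_tail_bound (n : ℕ) (hn : 2 ≤ n) (m : Fin (n + 1) → ℕ)
    (hm : ∀ j, 2 ≤ m j) (hsum : 3 ≤ ∑ j, (1 : ℝ) / m j) :
    ∃ ε₀ : ℝ, 0 < ε₀ ∧ ∀ ε : ℝ, 0 < ε → ε ≤ ε₀ →
      ∃ C : ℝ, 0 < C ∧ ∀ γ : Fin (n + 1) → ℕ, (∀ j, 0 < γ j) →
        (∑' q : ℕ+, ((q : ℝ) ^ (-(∑ j, (1 : ℝ) / m j - 1) + ε) *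
          ∏ j, (Nat.gcd (γ j) q : ℝ) ^ ((1 : ℝ) / m j)))
        ≤ C * ∏ j, (γ j : ℝ) ^ ((1 : ℝ) / m j) := by
  refine ⟨1/2, by norm_num, fun ε hε hε' => ?_⟩
  -- the comparison series
  have hSsum : Summable (fun q : ℕ => (q : ℝ) ^ (-(3/2) : ℝ)) := by
    rw [Real.summable_nat_rpow]; norm_num
  have hg : Summable (fun q : ℕ+ => (q : ℝ) ^ (-(3/2) : ℝ)) :=
    hSsum.comp_injective (PNat.coe_injective)
  set S : ℝ := ∑' q : ℕ+, (q : ℝ) ^ (-(3/2) : ℝ) with hS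
  have hS0 : 0 ≤ S := tsum_nonneg fun q => Real.rpow_nonneg (Nat.cast_nonneg _) _
  refine ⟨S + 1, by linarith, fun γ hγ => ?_⟩
  set P : ℝ := ∏ j, (γ j : ℝ) ^ ((1 : ℝ) / m j) with hPdef
  have hP0 : 0 ≤ P := Finset.prod_nonneg fun j _ =>
    Real.rpow_nonneg (Nat.cast_nonneg _) _
  -- pointwise bound
  have key : ∀ q : ℕ+,
      (q : ℝ) ^ (-(∑ j, (1 : ℝ) / m j - 1) + ε) *
        ∏ j, (Nat.gcd (γ j) q : ℝ) ^ ((1 : ℝ) / m j)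
      ≤ (q : ℝ) ^ (-(3/2) : ℝ) * P := by
    intro q
    have hq1 : (1 : ℝ) ≤ (q : ℝ) := by exact_mod_cast q.one_le
    have h1 : (q : ℝ) ^ (-(∑ j, (1 : ℝ) / m j - 1) + ε) ≤ (q : ℝ) ^ (-(3/2) : ℝ) := by
      apply Real.rpow_le_rpow_of_exponent_le hq1
      linarith
    have h2 : ∏ j, (Nat.gcd (γ j) q : ℝ) ^ ((1 : ℝ) / m j) ≤ P := by
      apply Finset.prod_le_prod
      · intro j _; exact Real.rpow_nonneg (Nat.cast_nonneg _) _
      · intro j _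
        apply Real.rpow_le_rpow (Nat.cast_nonneg _)
        · exact_mod_cast Nat.gcd_le_left _ (hγ j)
        · positivity
    have hprod0 : 0 ≤ ∏ j, (Nat.gcd (γ j) q : ℝ) ^ ((1 : ℝ) / m j) :=
      Finset.prod_nonneg fun j _ => Real.rpow_nonneg (Nat.cast_nonneg _) _
    exact mul_le_mul h1 h2 hprod0 (Real.rpow_nonneg (by linarith) _)
  have hf : Summable (fun q : ℕ+ => (q : ℝ) ^ (-(∑ j, (1 : ℝ) / m j - 1) + ε) *
      ∏ j, (Nat.gcd (γ j) q : ℝ) ^ ((1 : ℝ) / m j)) := by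
    apply Summable.of_nonneg_of_le (fun q => ?_) key (hg.mul_right P)
    exact mul_nonneg (Real.rpow_nonneg (Nat.cast_nonneg _) _)
      (Finset.prod_nonneg fun j _ => Real.rpow_nonneg (Nat.cast_nonneg _) _)
  calc (∑' q : ℕ+, ((q : ℝ) ^ (-(∑ j, (1 : ℝ) / m j - 1) + ε) *
          ∏ j, (Nat.gcd (γ j) q : ℝ) ^ ((1 : ℝ) / m j)))
      ≤ ∑' q : ℕ+, (q : ℝ) ^ (-(3/2) : ℝ) * P := Summable.tsum_le_tsum key hf (hg.mul_right P)
    _ = (∑' q : ℕ+, (q : ℝ) ^ (-(3/2) : ℝ)) * P := tsum_mul_right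
    _ = S * P := by rw [hS]
    _ ≤ (S + 1) * P := by nlinarith
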